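/- For every 𝐇 ∈ (0,1), the function s ↦ ((1+s)^{𝐇−1/2} − s^{𝐇−1/2})² is integrable on (0,∞); in particular the normalizing constant c_𝐇 = 1/(2𝐇) + ∫_0^∞ ((1+s)^{𝐇−1/2} − s^{𝐇−1/2})² ds appearing in the definition of K_𝐇 is finite and positive. -/

import Mathlib

open MeasureTheory

/-- The normalizing constant `c_𝐇 = 1/(2𝐇) + ∫₀^∞ ((1+s)^{𝐇−1/2} − s^{𝐇−1/2})² ds`. -/
noncomputable def cH (H : ℝ) : ℝ :=
  1 / (2 * H) + ∫ s in Set.Ioi (0 : ℝ), ((1 + s) ^ (H - 1 / 2) - s ^ (H - 1 / 2)) ^ 2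

lemma mvt_bound (H : ℝ) (hH : H ∈ Set.Ioo (0 : ℝ) 1) {t : ℝ} (ht : 1 < t) :
    |(1 + t) ^ (H - 1 / 2) - t ^ (H - 1 / 2)| ≤ (1 / 2) * t ^ (H - 3 / 2) := by
  obtain ⟨h0, h1⟩ := hH
  have ht0 : (0 : ℝ) < t := lt_trans one_pos ht
  have key := Convex.norm_image_sub_le_of_norm_hasDerivWithin_le
    (f := fun x : ℝ => x ^ (H - 1 / 2))
    (f' := fun x : ℝ => (H - 1 / 2) * x ^ (H - 1 / 2 - 1))
    (s := Set.Icc t (1 + t)) (C := (1 / 2) * t ^ (H - 3 / 2))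
    (fun x hx => (Real.hasDerivAt_rpow_const
      (Or.inl (ne_of_gt (lt_of_lt_of_le ht0 hx.1)))).hasDerivWithinAt)
    ?_ (convex_Icc _ _) ⟨le_refl t, by linarith⟩ ⟨by linarith, le_refl _⟩
  · have : ‖(1 + t : ℝ) - t‖ = 1 := by
      rw [Real.norm_eq_abs]; norm_num
    rw [this, mul_one] at key
    simpa [Real.norm_eq_abs] using key
  · intro x hx
    have hx0 : (0 : ℝ) < x := lt_of_lt_of_le ht0 hx.1
    rw [Real.norm_eq_abs, abs_mul]
    have h2 : |x ^ (H - 1 / 2 - 1)| = x ^ (H - 1 / 2 - 1) :=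
      abs_of_nonneg (Real.rpow_nonneg hx0.le _)
    rw [h2]
    have hle : x ^ (H - 1 / 2 - 1) ≤ t ^ (H - 3 / 2) := by
      have heq : H - 1 / 2 - 1 = H - 3 / 2 := by ring
      rw [heq]
      exact Real.rpow_le_rpow_of_nonpos ht0 hx.1 (by linarith)
    have habs : |H - 1 / 2| ≤ 1 / 2 := by
      rw [abs_le]; constructor <;> linarith
    exact mul_le_mul habs hle (Real.rpow_nonneg hx0.le _) (by norm_num)

/-- For every `𝐇 ∈ (0,1)`, the function `s ↦ ((1+s)^{𝐇−1/2} − s^{𝐇−1/2})²` is integrable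
on `(0,∞)`; in particular the normalizing constant `c_𝐇` is finite and positive. -/
theorem cH_integrable_and_pos (H : ℝ) (hH : H ∈ Set.Ioo (0 : ℝ) 1) :
    IntegrableOn (fun s : ℝ => ((1 + s) ^ (H - 1 / 2) - s ^ (H - 1 / 2)) ^ 2)
      (Set.Ioi (0 : ℝ)) ∧ 0 < cH H := by
  obtain ⟨h0, h1⟩ := hH
  set f : ℝ → ℝ := fun s => ((1 + s) ^ (H - 1 / 2) - s ^ (H - 1 / 2)) ^ 2 with hf_def
  have hcont : ContinuousOn f (Set.Ioi (0 : ℝ)) := by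
    apply ContinuousOn.pow
    apply ContinuousOn.sub
    · exact (continuousOn_const.add continuousOn_id).rpow_const
        (fun x hx => Or.inl (by simp only [Set.mem_Ioi] at hx; intro h; simp at h; linarith))
    · exact continuousOn_id.rpow_const
        (fun x hx => Or.inl (ne_of_gt hx))
  have hmeas : AEStronglyMeasurable f (volume.restrict (Set.Ioi (0:ℝ))) :=
    hcont.aestronglyMeasurable measurableSet_Ioi
  -- integrability on (0, 1]
  have hI1 : IntegrableOn f (Set.Ioc (0:ℝ) 1) := by
    have hg : IntegrableOn (fun s : ℝ => 8 + 2 * s ^ (2 * H - 1)) (Set.Ioc (0:ℝ) 1) := by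
      apply Integrable.add (integrableOn_const measure_Ioc_lt_top.ne)
      exact (Integrable.const_mul ((intervalIntegral.intervalIntegrable_rpow'
        (r := 2 * H - 1) (by linarith)).1) 2)
    apply Integrable.mono' hg (hmeas.mono_set Set.Ioc_subset_Ioi_self)
    filter_upwards [ae_restrict_mem measurableSet_Ioc] with s hs
    obtain ⟨hs0, hs1⟩ := hs
    have ha0 : (0:ℝ) ≤ (1 + s) ^ (H - 1 / 2) := Real.rpow_nonneg (by linarith) _
    have hb0 : (0:ℝ) ≤ s ^ (H - 1 / 2) := Real.rpow_nonneg hs0.le _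
    have ha2 : (1 + s) ^ (H - 1 / 2) ≤ 2 := by
      rcases le_or_gt 0 (H - 1 / 2) with h | h
      · calc (1 + s) ^ (H - 1 / 2) ≤ (2:ℝ) ^ (H - 1 / 2) :=
            Real.rpow_le_rpow (by linarith) (by linarith) h
          _ ≤ (2:ℝ) ^ (1:ℝ) := Real.rpow_le_rpow_of_exponent_le (by norm_num) (by linarith)
          _ = 2 := Real.rpow_one 2
      · calc (1 + s) ^ (H - 1 / 2) ≤ (1:ℝ) ^ (H - 1 / 2) :=
            Real.rpow_le_rpow_of_nonpos one_pos (by linarith) h.le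
          _ = 1 := Real.one_rpow _
          _ ≤ 2 := by norm_num
    have hsq : (s ^ (H - 1 / 2)) ^ 2 = s ^ (2 * H - 1) := by
      rw [← Real.rpow_natCast (s ^ (H - 1 / 2)) 2, ← Real.rpow_mul hs0.le]
      norm_num; ring_nf
    rw [Real.norm_eq_abs, hf_def]
    have : ((1 + s) ^ (H - 1 / 2) - s ^ (H - 1 / 2)) ^ 2
        ≤ 8 + 2 * s ^ (2 * H - 1) := by
      rw [← hsq]; nlinarith [sq_nonneg ((1 + s) ^ (H - 1 / 2) + s ^ (H - 1 / 2))]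
    rw [abs_of_nonneg (sq_nonneg _)]
    exact this
  -- integrability on (1, ∞)
  have hI2 : IntegrableOn f (Set.Ioi (1:ℝ)) := by
    have hg : IntegrableOn (fun s : ℝ => (1/4 : ℝ) * s ^ (2 * H - 3)) (Set.Ioi (1:ℝ)) :=
      (integrableOn_Ioi_rpow_of_lt (by linarith) one_pos).const_mul _
    apply Integrable.mono' hg
      (hmeas.mono_set (Set.Ioi_subset_Ioi zero_le_one))
    filter_upwards [ae_restrict_mem measurableSet_Ioi] with t ht
    simp only [Set.mem_Ioi] at ht
    have ht0 : (0:ℝ) < t := lt_trans one_pos ht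
    have key := mvt_bound H ⟨h0, h1⟩ ht
    have hsq : (t ^ (H - 3 / 2)) ^ 2 = t ^ (2 * H - 3) := by
      rw [← Real.rpow_natCast (t ^ (H - 3 / 2)) 2, ← Real.rpow_mul ht0.le]
      norm_num; ring_nf
    rw [Real.norm_eq_abs, hf_def, abs_of_nonneg (sq_nonneg _)]
    calc ((1 + t) ^ (H - 1 / 2) - t ^ (H - 1 / 2)) ^ 2
        = |(1 + t) ^ (H - 1 / 2) - t ^ (H - 1 / 2)| ^ 2 := (sq_abs _).symm
      _ ≤ ((1 / 2) * t ^ (H - 3 / 2)) ^ 2 := by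
          apply pow_le_pow_left₀ (abs_nonneg _) key
      _ = (1/4 : ℝ) * t ^ (2 * H - 3) := by rw [mul_pow, hsq]; norm_num
  have hint : IntegrableOn f (Set.Ioi (0:ℝ)) := by
    have hunion : Set.Ioc (0:ℝ) 1 ∪ Set.Ioi 1 = Set.Ioi 0 := Set.Ioc_union_Ioi_eq_Ioi zero_le_one
    rw [← hunion]
    exact hI1.union hI2
  refine ⟨hint, ?_⟩
  have hnn : 0 ≤ ∫ s in Set.Ioi (0:ℝ), f s :=
    setIntegral_nonneg measurableSet_Ioi (fun s _ => sq_nonneg _)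
  have : 0 < 1 / (2 * H) := by positivity
  unfold cH
  linarith [hnn]
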